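/- arXiv:1001.1516 — 4 statements merged into one kernel-verified Lean document; each statement's English description precedes it below -/
import Mathlib

section
/- Let ψ = (∂/∂x₁)^M θ with θ ∈ L²(ℝ²), so that ψ̂(ω) = (2πi ω₁)^M θ̂(ω) up to normalization, assume θ has Fourier decay of order L₂ in the second variable and 2M − 1/2 > L₂ > M ≥ 1. Then there is a constant C > 0 such that for all ξ of the form ξ = (ξ₁, rξ₁) with ξ₁ ≠ 0 and |r| ≤ 3/2, ∫_0^1 ∫_{|s|>2, |s|≤∞} |ψ̂(aξ₁, a^{1/2}(ξ₂ − sξ₁))|² a^{−3/2} ds da ≤ C |ξ₁|^{−2(L₂ − M)}. -/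
/-
Common setup: we work on ℝ² = `EuclideanSpace ℝ (Fin 2)`.
The Fourier transform uses the paper's convention f̂(ω) = ∫ f(x) e^{2πi ω·x} dx.
Since a general L² function need not be integrable, the Fourier transform of an
L² function `f` is represented by a function `g` together with the hypothesis
`IsFT f g`, which says that `g` is the Fourier transform of `f` in the weak
(tempered-distribution/Parseval) sense.
-/

noncomputable section
open MeasureTheory Filter Metric Complex
open scoped Real RealInnerProductSpace Pointwise

/-- The Euclidean plane ℝ². -/
abbrev E2 : Type := EuclideanSpace ℝ (Fin 2)

/-- The vector (a, b) ∈ ℝ². -/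
def v2 (a b : ℝ) : E2 := WithLp.toLp 2 ![a, b]

/-- Fourier transform with the paper's convention f̂(ω) = ∫ f(x) e^{2πi ω·x} dx. -/
def FT (f : E2 → ℂ) (ω : E2) : ℂ :=
  ∫ x : E2, Complex.exp (2 * Real.pi * Complex.I * ((⟪ω, x⟫ : ℝ) : ℂ)) * f x

/-- `g` is the (distributional) Fourier transform of `f`, expressed by the Parseval
pairing against Schwartz functions:  ∫ g·φ = ∫ f·φ̂. -/
def IsFT (f g : E2 → ℂ) : Prop :=
  ∀ φ : SchwartzMap E2 ℂ, ∫ ξ : E2, g ξ * φ ξ = ∫ x : E2, f x * FT (fun y => φ y) x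

/-- L² inner product ⟨f, g⟩ = ∫ f ḡ. -/
def ip (f g : E2 → ℂ) : ℂ := ∫ x : E2, f x * (starRingEnd ℂ) (g x)

/-- ψ_{ast}(x) = ψ((x₁−t₁−s(x₂−t₂))/a, (x₂−t₂)/√a). -/
def shDil (ψ : E2 → ℂ) (a s : ℝ) (t : E2) : E2 → ℂ := fun x =>
  ψ (v2 ((x 0 - t 0 - s * (x 1 - t 1)) / a) ((x 1 - t 1) / Real.sqrt a))

/-- Translation (Tt t f)(x) = f(x − t). -/
def Tt (t : E2) (f : E2 → ℂ) : E2 → ℂ := fun x => f (x - t)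

/-- Coordinate swap (ξ₁, ξ₂) ↦ (ξ₂, ξ₁); thus ψ^ν = ψ ∘ swap2 and ψ̂^ν = ψ̂ ∘ swap2. -/
def swap2 (ξ : E2) : E2 := v2 (ξ 1) (ξ 0)

/-- C_ψ = ∫ |ψ̂(ω)|²/|ω₁|² dω (expressed in terms of ψ̂). -/
def Cadm (hatψ : E2 → ℂ) : ℝ := ∫ ω : E2, ‖hatψ ω‖ ^ 2 / |ω 0| ^ 2

/-- ψ is a shearlet with M vanishing moments in the x₁-direction:
∫ |ψ̂(ω)|²/|ω₁|^{2M} dω < ∞ (expressed in terms of ψ̂). -/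
def IsShearlet (hatψ : E2 → ℂ) (M : ℕ) : Prop :=
  Integrable (fun ω : E2 => ‖hatψ ω‖ ^ 2 / |ω 0| ^ (2 * M)) volume

/-- Δ_ψ(ξ) = ∫_{−2}^{2}∫_0^1 |ψ̂(aξ₁, √a(ξ₂−sξ₁))|² a^{−3/2} da ds (in terms of ψ̂). -/
def Δsh (hatψ : E2 → ℂ) (ξ : E2) : ℝ :=
  ∫ s in Set.Icc (-2 : ℝ) 2, ∫ a in Set.Ioc (0 : ℝ) 1,
    ‖hatψ (v2 (a * ξ 0) (Real.sqrt a * (ξ 1 - s * ξ 0)))‖ ^ 2 * a ^ (-(3/2) : ℝ)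

/-- `g` has Fourier decay of order `L` in the `i`-th variable: |g(ξ)| ≤ C|ξ_i|^{−L},
written multiplicatively to avoid division by zero. -/
def FourierDecay (g : E2 → ℂ) (i : Fin 2) (L : ℝ) : Prop :=
  ∃ C > 0, ∀ ξ : E2, ‖g ξ‖ * |ξ i| ^ L ≤ C

/-- Indicator function of the cone 𝒞 = {ξ : |ξ₂| ≤ |ξ₁|}. -/
def coneInd : E2 → ℝ := Set.indicator {w : E2 | |w 1| ≤ |w 0|} (fun _ => (1 : ℝ))

/-- p̂₀ = Φ̂ ∗ χ_𝒞 (Φ̂ is real by assumption, so we take its real part). -/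
def p0hat (Φ : E2 → ℂ) (ξ : E2) : ℝ := ∫ η : E2, (FT Φ η).re * coneInd (ξ - η)
lemma aux_pt (C0 L2 : ℝ) (M : ℕ) (a x u v : ℝ)
    (ha : 0 < a) (hx : 0 < x) (hu : 0 < u)
    (hv : 0 ≤ v) (hvb : v * (Real.sqrt a * u * x) ^ L2 ≤ C0) :
    ((2 * Real.pi * (a * x)) ^ M * v) ^ 2 * a ^ (-(3/2) : ℝ)
      ≤ (2 * Real.pi) ^ (2 * M) * C0 ^ 2 * x ^ (2 * (M:ℝ) - 2 * L2)
          * a ^ (2 * (M:ℝ) - L2 - 3/2) * u ^ (-(2 * L2)) := by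
  have hb : 0 < Real.sqrt a * u * x := by positivity
  have hv' : v ≤ C0 * (Real.sqrt a * u * x) ^ (-L2) := by
    rw [Real.rpow_neg hb.le, ← div_eq_mul_inv, le_div_iff₀ (Real.rpow_pos_of_pos hb _)]
    exact hvb
  have hbase : 0 ≤ (2 * Real.pi * (a * x)) ^ M := by positivity
  have step1 : ((2 * Real.pi * (a * x)) ^ M * v) ^ 2 * a ^ (-(3/2) : ℝ)
      ≤ ((2 * Real.pi * (a * x)) ^ M * (C0 * (Real.sqrt a * u * x) ^ (-L2))) ^ 2
          * a ^ (-(3/2) : ℝ) := by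
    apply mul_le_mul_of_nonneg_right _ (Real.rpow_nonneg ha.le _)
    exact pow_le_pow_left₀ (mul_nonneg hbase hv)
      (mul_le_mul_of_nonneg_left hv' hbase) 2
  refine step1.trans_eq ?_
  have h2 : ((Real.sqrt a * u * x) ^ (-L2)) ^ (2:ℕ)
      = a ^ (-L2) * u ^ (-(2*L2)) * x ^ (-(2*L2)) := by
    rw [← Real.rpow_natCast ((Real.sqrt a * u * x) ^ (-L2)) 2, ← Real.rpow_mul hb.le]
    rw [Real.mul_rpow (by positivity) hx.le, Real.mul_rpow (Real.sqrt_nonneg a) hu.le]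
    rw [Real.sqrt_eq_rpow, ← Real.rpow_mul ha.le]
    norm_num
    ring_nf
  have h3 : ((2 * Real.pi * (a * x)) ^ M * (C0 * (Real.sqrt a * u * x) ^ (-L2))) ^ 2
      = (2 * Real.pi) ^ (2*M) * C0 ^ 2 * (a ^ (2*M) * x ^ (2*M))
          * (a ^ (-L2) * u ^ (-(2*L2)) * x ^ (-(2*L2))) := by
    rw [← h2]; ring
  rw [h3]
  rw [Real.rpow_natCast a (2*M) |>.symm, Real.rpow_natCast x (2*M) |>.symm]
  rw [show ((2*M : ℕ) : ℝ) = 2*(M:ℝ) by push_cast; ring]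
  rw [show (2 * (M:ℝ) - 2*L2) = 2*(M:ℝ) + (-(2*L2)) by ring,
      show (2 * (M:ℝ) - L2 - 3/2) = 2*(M:ℝ) + (-L2) + (-(3/2)) by ring]
  rw [Real.rpow_add hx, Real.rpow_add ha, Real.rpow_add ha]
  ring

/-- for ψ = ∂₁^M θ (so |ψ̂(ω)| = (2π|ω₁|)^M |θ̂(ω)|) with θ̂ of Fourier
decay L₂ in the second variable, 2M − 1/2 > L₂ > M ≥ 1, and ξ = (ξ₁, rξ₁), |r| ≤ 3/2:
∫_0^1∫_{|s|>2} |ψ̂(aξ₁, √a(ξ₂ − sξ₁))|² a^{−3/2} ds da ≤ C|ξ₁|^{−2(L₂−M)}. -/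
theorem high_frequency_large_shear_estimate
    (ψ θ hatψ hatθ : E2 → ℂ) (M : ℕ) (L2 : ℝ)
    (hθ2 : MemLp θ 2 (volume : Measure E2))
    (hFTψ : IsFT ψ hatψ) (hFTθ : IsFT θ hatθ)
    (hrel : ∀ ω : E2, ‖hatψ ω‖ = (2 * Real.pi * |ω 0|) ^ M * ‖hatθ ω‖)
    (hdec : FourierDecay hatθ 1 L2)
    (hM : 1 ≤ M) (hML2 : (M : ℝ) < L2) (hL2M : L2 < 2 * M - 1/2) :
    ∃ C > 0, ∀ ξ1 r : ℝ, ξ1 ≠ 0 → |r| ≤ 3/2 →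
      (∫ a in Set.Ioc (0 : ℝ) 1, ∫ s in {s : ℝ | 2 < |s|},
          ‖hatψ (v2 (a * ξ1) (Real.sqrt a * (r * ξ1 - s * ξ1)))‖ ^ 2 * a ^ (-(3/2) : ℝ))
        * |ξ1| ^ (2 * (L2 - M)) ≤ C := by
  obtain ⟨C0, hC0, hdec'⟩ := hdec
  have hM1 : (1:ℝ) ≤ (M:ℝ) := by exact_mod_cast hM
  set q : ℝ := -(2*L2) with hqdef
  set p : ℝ := 2*(M:ℝ) - L2 - 3/2 with hpdef
  have hq : q < -1 := by rw [hqdef]; linarith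
  have hp : (-1:ℝ) < p := by rw [hpdef]; linarith
  have hmeasS : MeasurableSet {s : ℝ | 2 < |s|} :=
    (isOpen_lt continuous_const _root_.continuous_abs).measurableSet
  -- integrability of |s|^q on {2 < |s|}
  have hIoi : IntegrableOn (fun s : ℝ => |s| ^ q) (Set.Ioi (2:ℝ)) :=
    (integrableOn_Ioi_rpow_of_lt hq two_pos).congr_fun
      (fun x hx => by rw [abs_of_pos (lt_trans two_pos hx)]) measurableSet_Ioi
  have hIio : IntegrableOn (fun s : ℝ => |s| ^ q) (Set.Iio (-2:ℝ)) := by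
    have hpre : (Neg.neg ⁻¹' Set.Iio (-2:ℝ) : Set ℝ) = Set.Ioi 2 := by
      ext x; simp only [Set.mem_preimage, Set.mem_Iio, Set.mem_Ioi]
      constructor <;> intro h <;> linarith
    have := ((Measure.measurePreserving_neg (volume : Measure ℝ)).integrableOn_comp_preimage
      (Homeomorph.neg ℝ).measurableEmbedding
      (f := fun s : ℝ => |s| ^ q) (s := Set.Iio (-2:ℝ))).1
    apply this
    rw [hpre]
    exact hIoi.congr_fun (fun x _ => by simp [Function.comp, abs_neg]) measurableSet_Ioi
  have hSint : IntegrableOn (fun s : ℝ => |s| ^ q) {s : ℝ | 2 < |s|} := by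
    have hset : {s : ℝ | 2 < |s|} = Set.Iio (-2) ∪ Set.Ioi 2 := by
      ext s
      simp only [Set.mem_setOf_eq, Set.mem_union, Set.mem_Iio, Set.mem_Ioi, lt_abs]
      constructor
      · rintro (h | h); · right; exact h
        · left; linarith
      · rintro (h | h); · right; linarith
        · left; exact h
    rw [hset]; exact hIio.union hIoi
  have hAint : IntegrableOn (fun a : ℝ => a ^ p) (Set.Ioc (0:ℝ) 1) := by
    rw [← intervalIntegrable_iff_integrableOn_Ioc_of_le zero_le_one]
    exact intervalIntegral.intervalIntegrable_rpow' hp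
  set S : ℝ := ∫ s in {s : ℝ | 2 < |s|}, |s| ^ q with hSdef
  set A : ℝ := ∫ a in Set.Ioc (0:ℝ) 1, a ^ p with hAdef
  have hS0 : 0 ≤ S := setIntegral_nonneg hmeasS (fun s _ => Real.rpow_nonneg (abs_nonneg _) _)
  have hA0 : 0 ≤ A := setIntegral_nonneg measurableSet_Ioc
    (fun a ha => Real.rpow_nonneg ha.1.le _)
  set K : ℝ := (2 * Real.pi) ^ (2*M) * C0 ^ 2 * (4:ℝ) ^ (2*L2) with hKdef
  have hK : 0 < K := by rw [hKdef]; positivity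
  refine ⟨K * S * A + 1, by positivity, ?_⟩
  intro ξ1 r hξ hr
  set x : ℝ := |ξ1| with hxdef
  have hx : 0 < x := abs_pos.2 hξ
  set e : ℝ := 2 * (L2 - (M:ℝ)) with hedef
  set D : ℝ := K * x ^ (-e) with hDdef
  have hD : 0 < D := by rw [hDdef]; positivity
  -- pointwise bound
  have hpt : ∀ a ∈ Set.Ioc (0:ℝ) 1, ∀ s ∈ {s : ℝ | 2 < |s|},
      ‖hatψ (v2 (a * ξ1) (Real.sqrt a * (r * ξ1 - s * ξ1)))‖ ^ 2 * a ^ (-(3/2) : ℝ)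
        ≤ D * a ^ p * |s| ^ q := by
    intro a ha s hs
    have ha0 : 0 < a := ha.1
    have hs2 : 2 < |s| := hs
    set w : E2 := v2 (a * ξ1) (Real.sqrt a * (r * ξ1 - s * ξ1)) with hwdef
    have hw0 : |w 0| = a * x := by
      simp only [hwdef, v2]
      rw [show (![a * ξ1, Real.sqrt a * (r * ξ1 - s * ξ1)] : Fin 2 → ℝ) 0 = a * ξ1 from rfl]
      rw [abs_mul, abs_of_pos ha0]
    have hu1 : (1:ℝ)/2 < |r - s| := by
      have h1 : |s| - |r| ≤ |s - r| := abs_sub_abs_le_abs_sub s r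
      rw [abs_sub_comm] at h1
      linarith [hr]
    have hu0 : 0 < |r - s| := by linarith
    have hu4 : |s| ≤ 4 * |r - s| := by
      have h1 : |s| - |r| ≤ |r - s| := by
        rw [abs_sub_comm]; exact abs_sub_abs_le_abs_sub s r
      linarith [hr, hs2]
    have hw1 : |w 1| = Real.sqrt a * |r - s| * x := by
      simp only [hwdef, v2]
      rw [show (![a * ξ1, Real.sqrt a * (r * ξ1 - s * ξ1)] : Fin 2 → ℝ) 1
          = Real.sqrt a * (r * ξ1 - s * ξ1) from rfl]
      rw [show r * ξ1 - s * ξ1 = (r - s) * ξ1 by ring, abs_mul, abs_mul,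
        _root_.abs_of_nonneg (Real.sqrt_nonneg a)]
      ring
    have hdw := hdec' w
    rw [hw1] at hdw
    have key : ‖hatψ w‖ ^ 2 * a ^ (-(3/2) : ℝ)
        ≤ (2 * Real.pi) ^ (2*M) * C0 ^ 2 * x ^ (2 * (M:ℝ) - 2 * L2)
            * a ^ p * |r - s| ^ (-(2*L2)) := by
      rw [hrel w, hw0, hpdef]
      exact aux_pt C0 L2 M a x |r - s| ‖hatθ w‖ ha0 hx hu0 (norm_nonneg _) hdw
    refine key.trans ?_
    have hub : |r - s| ^ (-(2*L2)) ≤ (4:ℝ) ^ (2*L2) * |s| ^ q := by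
      have h1 : |r - s| ^ (-(2*L2)) ≤ (|s| / 4) ^ (-(2*L2)) := by
        apply Real.rpow_le_rpow_of_nonpos (by linarith) (by linarith) (by linarith)
      refine h1.trans_eq ?_
      rw [Real.div_rpow (abs_nonneg _) (by norm_num), hqdef,
        Real.rpow_neg (by norm_num : (0:ℝ) ≤ 4), div_eq_mul_inv, inv_inv]
      ring
    calc (2 * Real.pi) ^ (2*M) * C0 ^ 2 * x ^ (2 * (M:ℝ) - 2 * L2)
            * a ^ p * |r - s| ^ (-(2*L2))
        ≤ (2 * Real.pi) ^ (2*M) * C0 ^ 2 * x ^ (2 * (M:ℝ) - 2 * L2)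
            * a ^ p * ((4:ℝ) ^ (2*L2) * |s| ^ q) := by
          apply mul_le_mul_of_nonneg_left hub
          have := Real.rpow_nonneg ha0.le p
          positivity
      _ = D * a ^ p * |s| ^ q := by
          rw [hDdef, hKdef, hxdef, hedef]
          rw [show -(2 * (L2 - (M:ℝ))) = 2 * (M:ℝ) - 2 * L2 by ring]
          ring
  -- inner integral bound
  have hinner : ∀ a ∈ Set.Ioc (0:ℝ) 1,
      (∫ s in {s : ℝ | 2 < |s|},
          ‖hatψ (v2 (a * ξ1) (Real.sqrt a * (r * ξ1 - s * ξ1)))‖ ^ 2 * a ^ (-(3/2) : ℝ))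
        ≤ D * S * a ^ p := by
    intro a ha
    have hb : (∫ s in {s : ℝ | 2 < |s|},
        ‖hatψ (v2 (a * ξ1) (Real.sqrt a * (r * ξ1 - s * ξ1)))‖ ^ 2 * a ^ (-(3/2) : ℝ))
        ≤ ∫ s in {s : ℝ | 2 < |s|}, (D * a ^ p) * |s| ^ q := by
      apply integral_mono_of_nonneg
      · exact Filter.Eventually.of_forall fun s => by
          have := Real.rpow_nonneg ha.1.le (-(3/2) : ℝ); positivity
      · exact (hSint.const_mul (D * a ^ p))
      · exact ae_restrict_of_forall_mem hmeasS fun s hs => by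
          have := hpt a ha s hs
          calc _ ≤ D * a ^ p * |s| ^ q := this
            _ = (D * a ^ p) * |s| ^ q := by ring
      
    refine hb.trans_eq ?_
    rw [integral_const_mul, ← hSdef]
    ring
  -- outer integral bound
  have houter : (∫ a in Set.Ioc (0:ℝ) 1, ∫ s in {s : ℝ | 2 < |s|},
      ‖hatψ (v2 (a * ξ1) (Real.sqrt a * (r * ξ1 - s * ξ1)))‖ ^ 2 * a ^ (-(3/2) : ℝ))
      ≤ D * S * A := by
    have hb : (∫ a in Set.Ioc (0:ℝ) 1, ∫ s in {s : ℝ | 2 < |s|},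
        ‖hatψ (v2 (a * ξ1) (Real.sqrt a * (r * ξ1 - s * ξ1)))‖ ^ 2 * a ^ (-(3/2) : ℝ))
        ≤ ∫ a in Set.Ioc (0:ℝ) 1, (D * S) * a ^ p := by
      apply integral_mono_of_nonneg
      · refine ae_restrict_of_forall_mem measurableSet_Ioc fun a ha => ?_
        apply integral_nonneg
        intro s
        have := Real.rpow_nonneg ha.1.le (-(3/2) : ℝ); positivity
      · exact (hAint.const_mul (D * S))
      · exact ae_restrict_of_forall_mem measurableSet_Ioc fun a ha =>
          (hinner a ha).trans_eq (by ring)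
    refine hb.trans_eq ?_
    rw [integral_const_mul, ← hAdef]
  -- conclude
  have hfinal : (∫ a in Set.Ioc (0:ℝ) 1, ∫ s in {s : ℝ | 2 < |s|},
      ‖hatψ (v2 (a * ξ1) (Real.sqrt a * (r * ξ1 - s * ξ1)))‖ ^ 2 * a ^ (-(3/2) : ℝ))
      * x ^ e ≤ D * S * A * x ^ e :=
    mul_le_mul_of_nonneg_right houter (Real.rpow_nonneg hx.le _)
  have hcancel : D * S * A * x ^ e = K * S * A := by
    rw [hDdef]
    have : x ^ (-e) * x ^ e = 1 := by
      rw [← Real.rpow_add hx]; simp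
    calc K * x ^ (-e) * S * A * x ^ e = K * S * A * (x ^ (-e) * x ^ e) := by ring
      _ = K * S * A := by rw [this, mul_one]
  rw [hcancel] at hfinal
  calc _ ≤ K * S * A := hfinal
    _ ≤ K * S * A + 1 := by linarith
end
end

section
/- Let ψ ∈ L²(ℝ²) have Fourier decay of order L₂ > 1/2 in the second variable. Then there is a constant C > 0 such that for all ξ of the form ξ = (ξ₁, rξ₁) with ξ₁ ≠ 0 and |r| ≤ 3/2, ∫_1^∞ ∫_{|s|>2} |ψ̂(aξ₁, a^{1/2}(ξ₂ − sξ₁))|² a^{−3/2} ds da ≤ C |ξ₁|^{−2L₂}. -/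
/-
Common setup: we work on ℝ² = `EuclideanSpace ℝ (Fin 2)`.
The Fourier transform uses the paper's convention f̂(ω) = ∫ f(x) e^{2πi ω·x} dx.
Since a general L² function need not be integrable, the Fourier transform of an
L² function `f` is represented by a function `g` together with the hypothesis
`IsFT f g`, which says that `g` is the Fourier transform of `f` in the weak
(tempered-distribution/Parseval) sense.
-/

noncomputable section
open MeasureTheory Filter Metric Complex
open scoped Real RealInnerProductSpace Pointwise

lemma aux_pt_s8 (hatψ : E2 → ℂ) (L2 C₀ : ℝ)
    (hL2 : 1/2 < L2) (hC₀ : ∀ ξ : E2, ‖hatψ ξ‖ * |ξ 1| ^ L2 ≤ C₀)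
    (ξ1 r : ℝ) (hξ : ξ1 ≠ 0) (hr : |r| ≤ 3/2) (a s : ℝ) (ha : 1 < a) (hs : 2 < |s|) :
    ‖hatψ (v2 (a * ξ1) (Real.sqrt a * (r * ξ1 - s * ξ1)))‖ ^ 2 * a ^ (-(3/2) : ℝ)
        * |ξ1| ^ (2 * L2)
      ≤ (C₀^2 * a ^ (-(L2 + 3/2) : ℝ)) * (|s|/4) ^ (-(2*L2) : ℝ) := by
  have ha0 : (0:ℝ) < a := lt_trans one_pos ha
  set v : E2 := v2 (a * ξ1) (Real.sqrt a * (r * ξ1 - s * ξ1)) with hv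
  have hv1 : |v 1| = Real.sqrt a * (|r - s| * |ξ1|) := by
    have h : v 1 = Real.sqrt a * ((r - s) * ξ1) := by
      show (v2 _ _) 1 = _
      simp only [v2, PiLp.toLp_apply, Matrix.cons_val_one, Matrix.head_cons, Matrix.cons_val_zero]
      ring
    rw [h, abs_mul, abs_mul, _root_.abs_of_nonneg (Real.sqrt_nonneg a)]
  have hsr : |s|/4 ≤ |r - s| := by
    have h1 : |s| - |r| ≤ |s - r| := abs_sub_abs_le_abs_sub s r
    rw [abs_sub_comm] at h1
    linarith
  have hs4 : (0:ℝ) < |s|/4 := by linarith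
  have hv1pos : 0 < |v 1| := by
    rw [hv1]
    exact mul_pos (Real.sqrt_pos.2 ha0) (mul_pos (lt_of_lt_of_le hs4 hsr) (abs_pos.2 hξ))
  have hkey := hC₀ v
  have h1 : ‖hatψ v‖ ≤ C₀ * |v 1| ^ (-L2 : ℝ) := by
    rw [Real.rpow_neg (abs_nonneg _), ← div_eq_mul_inv,
      le_div_iff₀ (Real.rpow_pos_of_pos hv1pos L2)]
    exact hkey
  have h2 : ‖hatψ v‖^2 ≤ C₀^2 * (|v 1| ^ (-L2 : ℝ))^2 := by
    rw [← mul_pow]; exact pow_le_pow_left₀ (norm_nonneg _) h1 2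
  have h3 : (|v 1| ^ (-L2 : ℝ))^2 = |v 1| ^ (-(2*L2) : ℝ) := by
    rw [← Real.rpow_natCast (|v 1| ^ (-L2:ℝ)) 2, ← Real.rpow_mul (abs_nonneg _)]
    congr 1; push_cast; ring
  have h4 : |v 1| ^ (-(2*L2) : ℝ)
      = a ^ (-L2 : ℝ) * (|r - s| ^ (-(2*L2) : ℝ) * |ξ1| ^ (-(2*L2) : ℝ)) := by
    rw [hv1, Real.mul_rpow (Real.sqrt_nonneg a) (by positivity),
      Real.mul_rpow (abs_nonneg _) (abs_nonneg _)]
    congr 1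
    rw [Real.sqrt_eq_rpow, ← Real.rpow_mul ha0.le]
    congr 1; ring
  have h5 : |r - s| ^ (-(2*L2) : ℝ) ≤ (|s|/4) ^ (-(2*L2) : ℝ) :=
    Real.rpow_le_rpow_of_nonpos hs4 hsr (by linarith)
  have h6 : ‖hatψ v‖^2
      ≤ C₀^2 * (a ^ (-L2:ℝ) * ((|s|/4) ^ (-(2*L2):ℝ) * |ξ1| ^ (-(2*L2):ℝ))) := by
    calc ‖hatψ v‖^2 ≤ C₀^2 * (|v 1| ^ (-L2 : ℝ))^2 := h2
      _ = C₀^2 * (a ^ (-L2:ℝ) * (|r - s| ^ (-(2*L2):ℝ) * |ξ1| ^ (-(2*L2):ℝ))) := by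
          rw [h3, h4]
      _ ≤ _ := by gcongr
  have hinv : |ξ1| ^ (-(2*L2):ℝ) * |ξ1| ^ (2*L2 : ℝ) = 1 := by
    rw [← Real.rpow_add (abs_pos.2 hξ)]; simp
  have haa : a ^ (-L2:ℝ) * a ^ (-(3/2):ℝ) = a ^ (-(L2+3/2) : ℝ) := by
    rw [← Real.rpow_add ha0]; ring_nf
  calc ‖hatψ v‖ ^ 2 * a ^ (-(3/2) : ℝ) * |ξ1| ^ (2 * L2 : ℝ)
      ≤ (C₀^2 * (a ^ (-L2:ℝ) * ((|s|/4) ^ (-(2*L2):ℝ) * |ξ1| ^ (-(2*L2):ℝ))))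
          * a ^ (-(3/2) : ℝ) * |ξ1| ^ (2 * L2 : ℝ) := by
        have hb : (0:ℝ) ≤ a ^ (-(3/2):ℝ) := Real.rpow_nonneg ha0.le _
        have hc : (0:ℝ) ≤ |ξ1| ^ (2*L2 : ℝ) := Real.rpow_nonneg (abs_nonneg _) _
        exact mul_le_mul_of_nonneg_right (mul_le_mul_of_nonneg_right h6 hb) hc
    _ = C₀^2 * ((|s|/4) ^ (-(2*L2):ℝ) * (a ^ (-L2:ℝ) * a ^ (-(3/2):ℝ)))
          * (|ξ1| ^ (-(2*L2):ℝ) * |ξ1| ^ (2*L2 : ℝ)) := by ring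
    _ = (C₀^2 * a ^ (-(L2 + 3/2) : ℝ)) * (|s|/4) ^ (-(2*L2) : ℝ) := by
        rw [haa, hinv, mul_one]; ring


open Set in
lemma aux_Is (p : ℝ) (hp : p < -1) :
    IntegrableOn (fun s : ℝ => (|s|/4) ^ p) {s : ℝ | 2 < |s|} := by
  have hIoi : IntegrableOn (fun s : ℝ => (|s|/4) ^ p) (Ioi (2:ℝ)) := by
    refine IntegrableOn.congr_fun
      (((integrableOn_Ioi_rpow_iff two_pos).2 hp).div_const ((4:ℝ) ^ p))
      (fun x hx => ?_) measurableSet_Ioi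
    rw [abs_of_pos (lt_trans two_pos hx),
      Real.div_rpow (le_of_lt (lt_trans two_pos hx)) (by norm_num)]
  have hIio : IntegrableOn (fun s : ℝ => (|s|/4) ^ p) (Iio (-2:ℝ)) := by
    have h1 : Integrable ((Ioi (2:ℝ)).indicator (fun s : ℝ => (|s|/4) ^ p)) :=
      (integrable_indicator_iff measurableSet_Ioi).2 hIoi
    have h2 := h1.comp_neg
    have heq : (fun s : ℝ => (Ioi (2:ℝ)).indicator (fun s : ℝ => (|s|/4) ^ p) (-s))
        = (Iio (-2:ℝ)).indicator (fun s : ℝ => (|s|/4) ^ p) := by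
      funext s
      by_cases h : s < -2
      · rw [Set.indicator_of_mem (by simp only [mem_Ioi]; linarith : (-s) ∈ Ioi (2:ℝ)),
          Set.indicator_of_mem (by simpa using h), abs_neg]
      · rw [Set.indicator_of_notMem (by simp only [mem_Ioi, not_lt]; linarith [not_lt.1 h]),
          Set.indicator_of_notMem (by simpa using h)]
    rw [heq] at h2
    exact (integrable_indicator_iff measurableSet_Iio).1 h2
  have hset : {s : ℝ | 2 < |s|} = Iio (-2:ℝ) ∪ Ioi (2:ℝ) := by
    ext s; simp [lt_abs, or_comm, lt_neg]
  rw [hset]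
  exact hIio.union hIoi

/-- if ψ̂ has Fourier decay of order L₂ > 1/2 in the second variable and
ξ = (ξ₁, rξ₁), |r| ≤ 3/2, then
∫_1^∞∫_{|s|>2} |ψ̂(aξ₁, √a(ξ₂ − sξ₁))|² a^{−3/2} ds da ≤ C|ξ₁|^{−2L₂}. -/
theorem low_frequency_large_shear_estimate
    (ψ hatψ : E2 → ℂ) (L2 : ℝ) (hL2 : 1/2 < L2)
    (hψ2 : MemLp ψ 2 (volume : Measure E2)) (hFT : IsFT ψ hatψ)
    (hdec : FourierDecay hatψ 1 L2) :
    ∃ C > 0, ∀ ξ1 r : ℝ, ξ1 ≠ 0 → |r| ≤ 3/2 →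
      (∫ a in Set.Ioi (1 : ℝ), ∫ s in {s : ℝ | 2 < |s|},
          ‖hatψ (v2 (a * ξ1) (Real.sqrt a * (r * ξ1 - s * ξ1)))‖ ^ 2 * a ^ (-(3/2) : ℝ))
        * |ξ1| ^ (2 * L2) ≤ C := by
  obtain ⟨C₀, hC₀pos, hC₀⟩ := hdec
  have hp : -(2*L2) < -1 := by linarith
  have hIs := aux_Is (-(2*L2)) hp
  have hIa : IntegrableOn (fun a : ℝ => a ^ (-(L2 + 3/2) : ℝ)) (Set.Ioi 1) :=
    (integrableOn_Ioi_rpow_iff one_pos).2 (by linarith)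
  set Ks : ℝ := ∫ s in {s : ℝ | 2 < |s|}, (|s|/4) ^ (-(2*L2) : ℝ) with hKs
  set Ka : ℝ := ∫ a in Set.Ioi (1:ℝ), a ^ (-(L2 + 3/2) : ℝ) with hKa
  have hKs0 : 0 ≤ Ks := integral_nonneg fun s => Real.rpow_nonneg (by positivity) _
  have hKa0 : 0 ≤ Ka := setIntegral_nonneg measurableSet_Ioi fun a ha =>
    Real.rpow_nonneg (le_of_lt (lt_trans one_pos ha)) _
  refine ⟨C₀^2 * Ks * Ka + 1, by nlinarith [mul_nonneg (mul_nonneg (sq_nonneg C₀) hKs0) hKa0], ?_⟩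
  intro ξ1 r hξ hr
  have hSmeas : MeasurableSet {s : ℝ | 2 < |s|} :=
    (isOpen_lt continuous_const _root_.continuous_abs).measurableSet
  set F : ℝ → ℝ → ℝ := fun a s =>
    ‖hatψ (v2 (a * ξ1) (Real.sqrt a * (r * ξ1 - s * ξ1)))‖ ^ 2 * a ^ (-(3/2) : ℝ) with hF
  have hc0 : (0:ℝ) ≤ |ξ1| ^ (2 * L2 : ℝ) := Real.rpow_nonneg (abs_nonneg _) _
  have step0 : (∫ a in Set.Ioi (1:ℝ), ∫ s in {s : ℝ | 2 < |s|}, F a s) * |ξ1| ^ (2*L2 : ℝ)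
      = ∫ a in Set.Ioi (1:ℝ), ∫ s in {s : ℝ | 2 < |s|}, F a s * |ξ1| ^ (2*L2 : ℝ) := by
    rw [← integral_mul_const]
    exact integral_congr_ae (Filter.Eventually.of_forall fun a => (integral_mul_const _ _).symm)
  rw [step0]
  have step1 : (∫ a in Set.Ioi (1:ℝ), ∫ s in {s : ℝ | 2 < |s|}, F a s * |ξ1| ^ (2*L2 : ℝ))
      ≤ ∫ a in Set.Ioi (1:ℝ), (C₀^2 * a ^ (-(L2 + 3/2) : ℝ)) * Ks := by
    refine integral_mono_of_nonneg
      ((ae_restrict_iff' measurableSet_Ioi).2 (Filter.Eventually.of_forall fun a ha =>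
        integral_nonneg fun s => mul_nonneg (mul_nonneg (by positivity)
          (Real.rpow_nonneg (le_of_lt (lt_trans one_pos ha)) _)) hc0))
      ?_ ?_
    · refine Integrable.congr ((hIa.const_mul (C₀^2)).mul_const Ks) ?_
      exact Filter.Eventually.of_forall fun a => by ring
    · refine (ae_restrict_iff' measurableSet_Ioi).2
        (Filter.Eventually.of_forall fun a ha => ?_)
      calc (∫ s in {s : ℝ | 2 < |s|}, F a s * |ξ1| ^ (2*L2 : ℝ))
          ≤ ∫ s in {s : ℝ | 2 < |s|},
              (C₀^2 * a ^ (-(L2 + 3/2) : ℝ)) * (|s|/4) ^ (-(2*L2) : ℝ) := by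
            refine integral_mono_of_nonneg
              (Filter.Eventually.of_forall fun s => mul_nonneg (mul_nonneg (by positivity)
                (Real.rpow_nonneg (le_of_lt (lt_trans one_pos ha)) _)) hc0)
              (hIs.const_mul _)
              ((ae_restrict_iff' hSmeas).2 (Filter.Eventually.of_forall fun s hs => ?_))
            exact aux_pt_s8 hatψ L2 C₀ hL2 hC₀ ξ1 r hξ hr a s ha hs
        _ = (C₀^2 * a ^ (-(L2 + 3/2) : ℝ)) * Ks := integral_const_mul _ _
  calc (∫ a in Set.Ioi (1:ℝ), ∫ s in {s : ℝ | 2 < |s|}, F a s * |ξ1| ^ (2*L2 : ℝ))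
      ≤ ∫ a in Set.Ioi (1:ℝ), (C₀^2 * a ^ (-(L2 + 3/2) : ℝ)) * Ks := step1
    _ = C₀^2 * Ks * Ka := by
        rw [hKa]
        rw [show (fun a : ℝ => (C₀^2 * a ^ (-(L2 + 3/2) : ℝ)) * Ks)
            = fun a : ℝ => (C₀^2 * Ks) * a ^ (-(L2 + 3/2) : ℝ) from funext fun a => by ring]
        rw [integral_const_mul]
    _ ≤ C₀^2 * Ks * Ka + 1 := by linarith
end
end

section
/- Let M ≥ 1 be an integer, A > 0, K ∈ ℕ, and let F : ℂ² → ℂ be an entire function satisfying |F(ζ)| ≤ C (1 + |ζ|)^K exp(2A |Im ζ|) for all ζ ∈ ℂ². Then Γ(ζ) := ∫_{−2}^{2} ∫_0^1 (aζ₁)^{2M} F(aζ₁, a^{1/2}(ζ₂ − sζ₁)) a^{−3/2} da ds defines an entire function on ℂ², and there is a constant C′ such that |Γ(ζ)| ≤ C′ (1 + |ζ|)^{2M + K} exp(2(1 + √2) A |Im ζ|) for all ζ ∈ ℂ². -/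
/-
Common setup: we work on ℝ² = `EuclideanSpace ℝ (Fin 2)`.
The Fourier transform uses the paper's convention f̂(ω) = ∫ f(x) e^{2πi ω·x} dx.
Since a general L² function need not be integrable, the Fourier transform of an
L² function `f` is represented by a function `g` together with the hypothesis
`IsFT f g`, which says that `g` is the Fourier transform of `f` in the weak
(tempered-distribution/Parseval) sense.
-/

noncomputable section
open MeasureTheory Filter Metric Complex
open scoped Real RealInnerProductSpace Pointwise

/-- ℂ² with the Euclidean norm. -/
abbrev Ec2 : Type := EuclideanSpace ℂ (Fin 2)

/-- The vector (a, b) ∈ ℂ². -/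
def v2c (a b : ℂ) : Ec2 := WithLp.toLp 2 ![a, b]

/-- |Im ζ| for ζ ∈ ℂ², i.e. the Euclidean norm of (Im ζ₁, Im ζ₂). -/
def imNorm (ζ : Ec2) : ℝ := Real.sqrt ((ζ 0).im ^ 2 + (ζ 1).im ^ 2)



set_option maxHeartbeats 1000000
set_option synthInstance.maxHeartbeats 400000

lemma v2c_zero (x y : ℂ) : v2c x y 0 = x := rfl
lemma v2c_one (x y : ℂ) : v2c x y 1 = y := rfl

lemma quad (a u v t : ℝ) (ha0 : 0 ≤ a) (ha1 : a ≤ 1) (hu : 0 ≤ u) (hv : 0 ≤ v)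
    (ht : |t| ≤ v + 2*u) :
    (a*u)^2 + (Real.sqrt a * t)^2 ≤ (3 + 2*Real.sqrt 2) * (u^2 + v^2) := by
  have h2 : (Real.sqrt 2)^2 = 2 := Real.sq_sqrt (by norm_num)
  have h1 : 1 ≤ Real.sqrt 2 := by nlinarith [Real.sqrt_nonneg 2]
  have hsa : (Real.sqrt a)^2 = a := Real.sq_sqrt ha0
  have ht2 : t^2 ≤ (v + 2*u)^2 := by
    have h := abs_nonneg t
    nlinarith [_root_.sq_abs t]
  have h3 : 0 < 2*Real.sqrt 2 - 2 := by nlinarith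
  have key : 4*u*v ≤ (2*Real.sqrt 2 - 2)*u^2 + (2 + 2*Real.sqrt 2)*v^2 := by
    nlinarith [sq_nonneg ((2*Real.sqrt 2 - 2)*u - 2*v), h2, h3]
  have h5 : a*t^2 ≤ t^2 := by nlinarith [sq_nonneg t]
  have h6 : (a*u)^2 ≤ u^2 := by
    nlinarith [mul_nonneg (mul_nonneg (sub_nonneg.2 ha1) (by linarith : (0:ℝ) ≤ 1+a)) (sq_nonneg u)]
  rw [show (Real.sqrt a * t)^2 = a*t^2 by rw [mul_pow, hsa]]
  nlinarith [key, h5, h6, ht2]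

lemma master (a u v t : ℝ) (ha0 : 0 ≤ a) (ha1 : a ≤ 1) (hu : 0 ≤ u) (hv : 0 ≤ v)
    (ht : |t| ≤ v + 2*u) :
    Real.sqrt ((a*u)^2 + (Real.sqrt a * t)^2)
      ≤ (1 + Real.sqrt 2) * Real.sqrt (u^2 + v^2) := by
  have h2 : (Real.sqrt 2)^2 = 2 := Real.sq_sqrt (by norm_num)
  have := Real.sqrt_le_sqrt (quad a u v t ha0 ha1 hu hv ht)
  calc Real.sqrt ((a*u)^2 + (Real.sqrt a * t)^2)
      ≤ Real.sqrt ((3 + 2*Real.sqrt 2) * (u^2 + v^2)) := this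
    _ = (1 + Real.sqrt 2) * Real.sqrt (u^2 + v^2) := by
        rw [show (3 + 2*Real.sqrt 2 : ℝ) = (1 + Real.sqrt 2)^2 by nlinarith [h2],
          Real.sqrt_mul (sq_nonneg _), Real.sqrt_sq (by positivity)]

lemma norm_v2c (x y : ℂ) : ‖v2c x y‖ = Real.sqrt (‖x‖^2 + ‖y‖^2) := by
  rw [EuclideanSpace.norm_eq]
  simp [Fin.sum_univ_two, v2c_zero, v2c_one]

lemma norm_Ec2 (ζ : Ec2) : ‖ζ‖ = Real.sqrt (‖ζ 0‖^2 + ‖ζ 1‖^2) := by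
  rw [EuclideanSpace.norm_eq]
  simp [Fin.sum_univ_two]

lemma norm_sq_complex (z : ℂ) : ‖z‖^2 = z.re^2 + z.im^2 := by
  rw [Complex.sq_norm, Complex.normSq_apply]; ring

lemma coord_le (ζ : Ec2) (i : Fin 2) : ‖ζ i‖ ≤ ‖ζ‖ := by
  have h : ‖ζ i‖ = Real.sqrt (‖ζ i‖^2) := (Real.sqrt_sq (norm_nonneg _)).symm
  rw [h, norm_Ec2]
  apply Real.sqrt_le_sqrt
  fin_cases i <;> simp only [Fin.zero_eta, Fin.mk_one, Fin.isValue] <;>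
    nlinarith [sq_nonneg ‖ζ 0‖, sq_nonneg ‖ζ 1‖]

lemma imNorm_nonneg (ζ : Ec2) : 0 ≤ imNorm ζ := Real.sqrt_nonneg _

lemma imNorm_le_norm (ζ : Ec2) : imNorm ζ ≤ ‖ζ‖ := by
  rw [imNorm, norm_Ec2]
  apply Real.sqrt_le_sqrt
  have h0 := norm_sq_complex (ζ 0)
  have h1 := norm_sq_complex (ζ 1)
  nlinarith [sq_nonneg (ζ 0).re, sq_nonneg (ζ 1).re]

lemma norm_w_le (a s : ℝ) (ha0 : 0 ≤ a) (ha1 : a ≤ 1) (hs : |s| ≤ 2) (ζ : Ec2) :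
    ‖v2c ((a:ℂ) * ζ 0) ((Real.sqrt a : ℂ) * (ζ 1 - (s:ℂ) * ζ 0))‖
      ≤ (1 + Real.sqrt 2) * ‖ζ‖ := by
  rw [norm_v2c, norm_Ec2]
  have e1 : ‖(a:ℂ) * ζ 0‖ = a * ‖ζ 0‖ := by
    rw [norm_mul, Complex.norm_real, Real.norm_eq_abs, _root_.abs_of_nonneg ha0]
  have e2 : ‖(Real.sqrt a : ℂ) * (ζ 1 - (s:ℂ) * ζ 0)‖
      = Real.sqrt a * ‖ζ 1 - (s:ℂ) * ζ 0‖ := by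
    rw [norm_mul, Complex.norm_real, Real.norm_eq_abs, _root_.abs_of_nonneg (Real.sqrt_nonneg a)]
  rw [e1, e2]
  have ht : |‖ζ 1 - (s:ℂ) * ζ 0‖| ≤ ‖ζ 1‖ + 2 * ‖ζ 0‖ := by
    rw [_root_.abs_of_nonneg (norm_nonneg _)]
    calc ‖ζ 1 - (s:ℂ) * ζ 0‖ ≤ ‖ζ 1‖ + ‖(s:ℂ) * ζ 0‖ := norm_sub_le _ _
      _ ≤ ‖ζ 1‖ + 2 * ‖ζ 0‖ := by
          rw [norm_mul, Complex.norm_real, Real.norm_eq_abs]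
          have h := norm_nonneg (ζ 0)
          nlinarith [mul_le_mul_of_nonneg_right hs h]
  exact master a ‖ζ 0‖ ‖ζ 1‖ _ ha0 ha1 (norm_nonneg _) (norm_nonneg _) ht

lemma im_w_le (a s : ℝ) (ha0 : 0 ≤ a) (ha1 : a ≤ 1) (hs : |s| ≤ 2) (ζ : Ec2) :
    imNorm (v2c ((a:ℂ) * ζ 0) ((Real.sqrt a : ℂ) * (ζ 1 - (s:ℂ) * ζ 0)))
      ≤ (1 + Real.sqrt 2) * imNorm ζ := by
  rw [imNorm, imNorm, v2c_zero, v2c_one]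
  have e1 : ((a:ℂ) * ζ 0).im = a * (ζ 0).im := by simp [Complex.mul_im]
  have e2 : ((Real.sqrt a : ℂ) * (ζ 1 - (s:ℂ) * ζ 0)).im
      = Real.sqrt a * ((ζ 1).im - s * (ζ 0).im) := by
    simp [Complex.mul_im, Complex.sub_im]
  rw [e1, e2]
  set i0 := (ζ 0).im
  set i1 := (ζ 1).im
  have ht : |i1 - s * i0| ≤ |i1| + 2 * |i0| := by
    calc |i1 - s * i0| ≤ |i1| + |s * i0| := abs_sub _ _
      _ ≤ |i1| + 2 * |i0| := by
          rw [abs_mul]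
          have := abs_nonneg i0
          nlinarith
  have hm := master a |i0| |i1| (i1 - s * i0) ha0 ha1 (abs_nonneg _) (abs_nonneg _) ht
  calc Real.sqrt ((a * i0)^2 + (Real.sqrt a * (i1 - s * i0))^2)
      = Real.sqrt ((a * |i0|)^2 + (Real.sqrt a * (i1 - s * i0))^2) := by
        rw [show (a * i0)^2 = (a * |i0|)^2 by rw [mul_pow, mul_pow, _root_.sq_abs]]
    _ ≤ (1 + Real.sqrt 2) * Real.sqrt (|i0|^2 + |i1|^2) := hm
    _ = (1 + Real.sqrt 2) * Real.sqrt (i0^2 + i1^2) := by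
        rw [_root_.sq_abs, _root_.sq_abs]

lemma apow_le (M : ℕ) (hM : 1 ≤ M) (a u : ℝ) (ha : 0 < a) (ha1 : a ≤ 1) (hu : 0 ≤ u) :
    (a*u)^(2*M) * a^(-(3/2):ℝ) ≤ u^(2*M) := by
  have key : a^(2*M) * a^(-(3/2):ℝ) ≤ 1 := by
    rw [← Real.rpow_natCast a (2*M), ← Real.rpow_add ha]
    apply Real.rpow_le_one ha.le ha1
    have : (1:ℝ) ≤ (M:ℝ) := by exact_mod_cast hM
    push_cast
    linarith
  calc (a*u)^(2*M) * a^(-(3/2):ℝ) = (a^(2*M) * a^(-(3/2):ℝ)) * u^(2*M) := by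
        rw [mul_pow]; ring
    _ ≤ 1 * u^(2*M) := by
        apply mul_le_mul_of_nonneg_right key (by positivity)
    _ = u^(2*M) := one_mul _

lemma pt_bound (M : ℕ) (hM : 1 ≤ M) (A : ℝ) (hA : 0 < A) (K : ℕ)
    (F : Ec2 → ℂ) (C : ℝ) (hC : 0 < C)
    (hbd : ∀ ζ : Ec2, ‖F ζ‖ ≤ C * (1 + ‖ζ‖) ^ K * Real.exp (2 * A * imNorm ζ))
    (a s : ℝ) (ha : a ∈ Set.Ioc (0:ℝ) 1) (hs : s ∈ Set.Icc (-2:ℝ) 2) (ζ : Ec2) :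
    ‖((a : ℂ) * ζ 0) ^ (2 * M)
        * F (v2c ((a : ℂ) * ζ 0) ((Real.sqrt a : ℂ) * (ζ 1 - (s : ℂ) * ζ 0)))
        * ((a ^ (-(3/2) : ℝ) : ℝ) : ℂ)‖
      ≤ C * (1 + Real.sqrt 2)^K * (1 + ‖ζ‖) ^ (2*M + K)
          * Real.exp (2 * (1 + Real.sqrt 2) * A * imNorm ζ) := by
  obtain ⟨ha0, ha1⟩ := ha
  have hs2 : |s| ≤ 2 := abs_le.2 ⟨hs.1, hs.2⟩
  set w := v2c ((a : ℂ) * ζ 0) ((Real.sqrt a : ℂ) * (ζ 1 - (s : ℂ) * ζ 0)) with hw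
  have e1 : ‖(a:ℂ) * ζ 0‖ = a * ‖ζ 0‖ := by
    rw [norm_mul, Complex.norm_real, Real.norm_eq_abs, _root_.abs_of_nonneg ha0.le]
  have e3 : ‖((a ^ (-(3/2) : ℝ) : ℝ) : ℂ)‖ = a ^ (-(3/2):ℝ) := by
    rw [Complex.norm_real, Real.norm_eq_abs, _root_.abs_of_nonneg (Real.rpow_nonneg ha0.le _)]
  have hwn : ‖w‖ ≤ (1 + Real.sqrt 2) * ‖ζ‖ := norm_w_le a s ha0.le ha1 hs2 ζ
  have hwi : imNorm w ≤ (1 + Real.sqrt 2) * imNorm ζ := im_w_le a s ha0.le ha1 hs2 ζ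
  have hFw := hbd w
  have h2 : (1 + ‖w‖)^K ≤ (1 + Real.sqrt 2)^K * (1 + ‖ζ‖)^K := by
    rw [← mul_pow]
    apply pow_le_pow_left₀ (by positivity)
    have h0 := Real.sqrt_nonneg 2
    have h0' := norm_nonneg ζ
    nlinarith
  have h3 : Real.exp (2 * A * imNorm w) ≤ Real.exp (2 * (1 + Real.sqrt 2) * A * imNorm ζ) := by
    apply Real.exp_le_exp.2
    have h0 := imNorm_nonneg w
    nlinarith
  rw [norm_mul, norm_mul, norm_pow, e1, e3]
  calc (a * ‖ζ 0‖)^(2*M) * ‖F w‖ * a ^ (-(3/2):ℝ)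
      ≤ (a * ‖ζ 0‖)^(2*M) * (C * (1 + ‖w‖)^K * Real.exp (2 * A * imNorm w)) * a ^ (-(3/2):ℝ) := by
        gcongr
    _ = ((a * ‖ζ 0‖)^(2*M) * a ^ (-(3/2):ℝ)) * (C * (1 + ‖w‖)^K * Real.exp (2 * A * imNorm w)) := by
        ring
    _ ≤ (‖ζ 0‖^(2*M)) * (C * ((1 + Real.sqrt 2)^K * (1 + ‖ζ‖)^K)
          * Real.exp (2 * (1 + Real.sqrt 2) * A * imNorm ζ)) := by
        have hL := apow_le M hM a ‖ζ 0‖ ha0 ha1 (norm_nonneg _)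
        have hR : C * (1 + ‖w‖)^K * Real.exp (2 * A * imNorm w)
            ≤ C * ((1 + Real.sqrt 2)^K * (1 + ‖ζ‖)^K)
              * Real.exp (2 * (1 + Real.sqrt 2) * A * imNorm ζ) :=
          mul_le_mul (mul_le_mul_of_nonneg_left h2 hC.le) h3 (Real.exp_pos _).le
            (mul_nonneg hC.le (by positivity))
        exact mul_le_mul hL hR
          (mul_nonneg (mul_nonneg hC.le (by positivity)) (Real.exp_pos _).le)
          (by positivity)
    _ ≤ ((1 + ‖ζ‖)^(2*M)) * (C * ((1 + Real.sqrt 2)^K * (1 + ‖ζ‖)^K)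
          * Real.exp (2 * (1 + Real.sqrt 2) * A * imNorm ζ)) := by
        gcongr
        have := coord_le ζ 0
        have := norm_nonneg ζ
        linarith
    _ = C * (1 + Real.sqrt 2)^K * (1 + ‖ζ‖) ^ (2*M + K)
          * Real.exp (2 * (1 + Real.sqrt 2) * A * imNorm ζ) := by
        rw [pow_add]; ring

def Tclm (s a : ℝ) : Ec2 →L[ℂ] Ec2 :=
  ((a:ℂ) • (EuclideanSpace.proj (0 : Fin 2) : Ec2 →L[ℂ] ℂ).smulRight (v2c 1 0))
  + ((Real.sqrt a : ℂ) • (EuclideanSpace.proj (1 : Fin 2) : Ec2 →L[ℂ] ℂ).smulRight (v2c 0 1))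
  - (((s : ℂ) * (Real.sqrt a : ℂ)) • (EuclideanSpace.proj (0 : Fin 2) : Ec2 →L[ℂ] ℂ).smulRight (v2c 0 1))

lemma Tclm_apply (s a : ℝ) (ζ : Ec2) :
    Tclm s a ζ = v2c ((a:ℂ) * ζ 0) ((Real.sqrt a : ℂ) * (ζ 1 - (s:ℂ) * ζ 0)) := by
  ext i
  simp only [Tclm, ContinuousLinearMap.sub_apply, ContinuousLinearMap.add_apply,
    ContinuousLinearMap.smul_apply, ContinuousLinearMap.smulRight_apply, PiLp.proj_apply]
  fin_cases i <;>
    simp only [Fin.zero_eta, Fin.mk_one, Fin.isValue, PiLp.sub_apply, PiLp.add_apply,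
      PiLp.smul_apply, v2c_zero, v2c_one, smul_eq_mul] <;> ring

def Phi (M : ℕ) (F : Ec2 → ℂ) : Ec2 → ℂ := fun w => (w 0)^(2*M) * F w

lemma Phi_diff (M : ℕ) (F : Ec2 → ℂ) (hF : Differentiable ℂ F) :
    Differentiable ℂ (Phi M F) :=
  (((EuclideanSpace.proj (0 : Fin 2) : Ec2 →L[ℂ] ℂ).differentiable).pow _).mul hF

def Fd (M : ℕ) (F : Ec2 → ℂ) (s a : ℝ) (x : Ec2) : Ec2 →L[ℂ] ℂ :=
  ((a ^ (-(3/2):ℝ) : ℝ) : ℂ) • ((fderiv ℂ (Phi M F) (Tclm s a x)).comp (Tclm s a))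

lemma G_eq (M : ℕ) (F : Ec2 → ℂ) (s a : ℝ) :
    (fun ζ : Ec2 => ((a:ℂ) * ζ 0)^(2*M)
        * F (v2c ((a:ℂ) * ζ 0) ((Real.sqrt a : ℂ) * (ζ 1 - (s:ℂ) * ζ 0)))
        * ((a ^ (-(3/2):ℝ) : ℝ) : ℂ))
      = fun ζ => Phi M F (Tclm s a ζ) * ((a ^ (-(3/2):ℝ) : ℝ) : ℂ) := by
  funext ζ
  rw [Phi, Tclm_apply, v2c_zero]

lemma G_hasFDeriv (M : ℕ) (F : Ec2 → ℂ) (hF : Differentiable ℂ F) (s a : ℝ) (x : Ec2) :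
    HasFDerivAt (fun ζ : Ec2 => Phi M F (Tclm s a ζ) * ((a ^ (-(3/2):ℝ) : ℝ) : ℂ))
      (Fd M F s a x) x := by
  have h1 : HasFDerivAt (fun ζ : Ec2 => Phi M F (Tclm s a ζ))
      ((fderiv ℂ (Phi M F) (Tclm s a x)).comp (Tclm s a)) x :=
    ((Phi_diff M F hF (Tclm s a x)).hasFDerivAt).comp x (Tclm s a).hasFDerivAt
  exact h1.mul_const _

lemma cauchy_bound (h : Ec2 → ℂ) (hd : Differentiable ℂ h) (z : Ec2) (Cb : ℝ)
    (hCb : ∀ w ∈ Metric.closedBall z 1, ‖h w‖ ≤ Cb) : ‖fderiv ℂ h z‖ ≤ 2*Cb + 1 := by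
  have hCb0 : 0 ≤ Cb := le_trans (norm_nonneg _) (hCb z (by simp))
  apply ContinuousLinearMap.opNorm_le_bound _ (by linarith)
  intro v
  rcases eq_or_ne v 0 with rfl | hv
  · simp
  have hvn : 0 < ‖v‖ := norm_pos_iff.2 hv
  set r : ℝ := ‖v‖⁻¹ with hr
  set g : ℂ → ℂ := fun t => h (z + t • v) with hg
  have hgd : Differentiable ℂ g :=
    hd.comp ((differentiable_id.smul_const v).const_add z)
  have h1 : HasDerivAt (fun t : ℂ => z + t • v) v 0 := by
    simpa using ((hasDerivAt_id (0:ℂ)).smul_const v).const_add z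
  have hderiv : HasDerivAt g (fderiv ℂ h z v) 0 := by
    have h2 := ((hd (z + (0:ℂ) • v)).hasFDerivAt).comp_hasDerivAt 0 h1
    simp only [zero_smul, add_zero] at h2
    exact h2
  have maps : Set.MapsTo g (Metric.ball (0:ℂ) r) (Metric.ball (g 0) (2*Cb+1)) := by
    intro t ht
    have hz : z + t • v ∈ Metric.closedBall z 1 := by
      rw [Metric.mem_closedBall, dist_eq_norm]
      have : ‖z + t • v - z‖ = ‖t‖ * ‖v‖ := by
        rw [add_sub_cancel_left, norm_smul]
      rw [this]
      rw [Metric.mem_ball, dist_zero_right, hr] at ht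
      have := mul_lt_mul_of_pos_right ht hvn
      rw [inv_mul_cancel₀ hvn.ne'] at this
      linarith
    have hb1 : ‖g t‖ ≤ Cb := hCb _ hz
    have hb0 : ‖g 0‖ ≤ Cb := hCb _ (by simpa [hg] using Metric.mem_closedBall_self zero_le_one)
    rw [Metric.mem_ball, dist_eq_norm]
    calc ‖g t - g 0‖ ≤ ‖g t‖ + ‖g 0‖ := norm_sub_le _ _
      _ < 2*Cb + 1 := by linarith
  have hle := Complex.norm_deriv_le_div_of_mapsTo_ball (hgd.differentiableOn) (maps.mono_right Metric.ball_subset_closedBall)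
    (by positivity : (0:ℝ) < r)
  calc ‖fderiv ℂ h z v‖ = ‖deriv g 0‖ := by rw [hderiv.deriv]
    _ ≤ (2*Cb+1)/r := hle
    _ = (2*Cb+1)*‖v‖ := by rw [hr, div_eq_mul_inv, inv_inv]

/-- if F is entire on ℂ² of exponential type
|F(ζ)| ≤ C(1+|ζ|)^K e^{2A|Im ζ|}, then
Γ(ζ) = ∫_{−2}^{2}∫_0^1 (aζ₁)^{2M} F(aζ₁, √a(ζ₂ − sζ₁)) a^{−3/2} da ds is entire and
|Γ(ζ)| ≤ C′(1+|ζ|)^{2M+K} e^{2(1+√2)A|Im ζ|}. -/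
theorem gamma_entire_exponential_type
    (M : ℕ) (hM : 1 ≤ M) (A : ℝ) (hA : 0 < A) (K : ℕ)
    (F : Ec2 → ℂ) (hF : Differentiable ℂ F)
    (C : ℝ) (hC : 0 < C)
    (hbd : ∀ ζ : Ec2, ‖F ζ‖ ≤ C * (1 + ‖ζ‖) ^ K * Real.exp (2 * A * imNorm ζ)) :
    Differentiable ℂ (fun ζ : Ec2 =>
      ∫ s in Set.Icc (-2 : ℝ) 2, ∫ a in Set.Ioc (0 : ℝ) 1,
        ((a : ℂ) * ζ 0) ^ (2 * M)
          * F (v2c ((a : ℂ) * ζ 0) ((Real.sqrt a : ℂ) * (ζ 1 - (s : ℂ) * ζ 0)))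
          * ((a ^ (-(3/2) : ℝ) : ℝ) : ℂ)) ∧
    ∃ C' > 0, ∀ ζ : Ec2,
      ‖∫ s in Set.Icc (-2 : ℝ) 2, ∫ a in Set.Ioc (0 : ℝ) 1,
          ((a : ℂ) * ζ 0) ^ (2 * M)
            * F (v2c ((a : ℂ) * ζ 0) ((Real.sqrt a : ℂ) * (ζ 1 - (s : ℂ) * ζ 0)))
            * ((a ^ (-(3/2) : ℝ) : ℝ) : ℂ)‖
        ≤ C' * (1 + ‖ζ‖) ^ (2 * M + K)
            * Real.exp (2 * (1 + Real.sqrt 2) * A * imNorm ζ) := by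
  classical
  haveI hf1 : IsFiniteMeasure (volume.restrict (Set.Icc (-2:ℝ) 2)) :=
    ⟨by rw [Measure.restrict_apply_univ, Real.volume_Icc]; exact ENNReal.ofReal_lt_top⟩
  haveI hf2 : IsFiniteMeasure (volume.restrict (Set.Ioc (0:ℝ) 1)) :=
    ⟨by rw [Measure.restrict_apply_univ, Real.volume_Ioc]; exact ENNReal.ofReal_lt_top⟩
  set μ : Measure (ℝ × ℝ) :=
    (volume.restrict (Set.Icc (-2:ℝ) 2)).prod (volume.restrict (Set.Ioc (0:ℝ) 1)) with hμ
  haveI : IsFiniteMeasure μ := by rw [hμ]; infer_instance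
  set S : Set (ℝ × ℝ) := Set.Icc (-2:ℝ) 2 ×ˢ Set.Ioc (0:ℝ) 1 with hS
  have hme : MeasurableSet S := measurableSet_Icc.prod measurableSet_Ioc
  have hμ_eq : μ = (volume.prod volume).restrict S := by
    rw [hμ, hS, Measure.prod_restrict]
  set G : (ℝ × ℝ) → Ec2 → ℂ := fun p ζ =>
    ((p.2 : ℂ) * ζ 0) ^ (2 * M)
      * F (v2c ((p.2 : ℂ) * ζ 0) ((Real.sqrt p.2 : ℂ) * (ζ 1 - (p.1 : ℂ) * ζ 0)))
      * ((p.2 ^ (-(3/2) : ℝ) : ℝ) : ℂ) with hG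
  have hGfun : ∀ p : ℝ × ℝ,
      G p = fun ζ => Phi M F (Tclm p.1 p.2 ζ) * ((p.2 ^ (-(3/2):ℝ) : ℝ) : ℂ) :=
    fun p => G_eq M F p.1 p.2
  have hGdiff : ∀ p, Differentiable ℂ (G p) := by
    intro p
    rw [hGfun p]
    exact fun x => (G_hasFDeriv M F hF p.1 p.2 x).differentiableAt
  have hae : ∀ᵐ p ∂μ, p ∈ S := by
    rw [hμ_eq]; exact ae_restrict_mem hme
  have hGb : ∀ p ∈ S, ∀ ζ : Ec2, ‖G p ζ‖
      ≤ C * (1 + Real.sqrt 2)^K * (1 + ‖ζ‖) ^ (2*M + K)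
          * Real.exp (2 * (1 + Real.sqrt 2) * A * imNorm ζ) :=
    fun p hp ζ => pt_bound M hM A hA K F C hC hbd p.2 p.1 hp.2 hp.1 ζ
  have hTop : Continuous fun p : ℝ × ℝ => Tclm p.1 p.2 := by
    unfold Tclm
    refine (Continuous.add ?_ ?_).sub ?_
    · exact (Complex.continuous_ofReal.comp continuous_snd).smul continuous_const
    · exact (Complex.continuous_ofReal.comp
        (Real.continuous_sqrt.comp continuous_snd)).smul continuous_const
    · exact ((Complex.continuous_ofReal.comp continuous_fst).mul
        (Complex.continuous_ofReal.comp (Real.continuous_sqrt.comp continuous_snd))).smul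
        continuous_const
  have hTcont : ∀ ζ : Ec2, Continuous fun p : ℝ × ℝ => Tclm p.1 p.2 ζ := fun ζ =>
    (ContinuousLinearMap.apply ℂ Ec2 ζ).continuous.comp hTop
  have hGcontp : ∀ ζ : Ec2, ContinuousOn (fun p : ℝ × ℝ => G p ζ) S := by
    intro ζ
    have h1 : ContinuousOn (fun p : ℝ × ℝ => ((p.2 ^ (-(3/2):ℝ) : ℝ) : ℂ)) S := by
      intro p hp
      exact (Complex.continuous_ofReal.continuousAt.comp
        ((Real.continuousAt_rpow_const p.2 _ (Or.inl (ne_of_gt hp.2.1))).comp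
          continuous_snd.continuousAt)).continuousWithinAt
    have h2 : Continuous fun p : ℝ × ℝ => Phi M F (Tclm p.1 p.2 ζ) :=
      (Phi_diff M F hF).continuous.comp (hTcont ζ)
    have h3 := h2.continuousOn.mul h1
    have : (fun p : ℝ × ℝ => G p ζ)
        = fun p => Phi M F (Tclm p.1 p.2 ζ) * ((p.2 ^ (-(3/2):ℝ) : ℝ) : ℂ) := by
      funext p; exact congrFun (hGfun p) ζ
    rw [this]
    exact h3
  have hGmeas : ∀ ζ : Ec2, AEStronglyMeasurable (fun p => G p ζ) μ := by
    intro ζ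
    rw [hμ_eq]
    exact (hGcontp ζ).aestronglyMeasurable hme
  have hGint : ∀ ζ : Ec2, Integrable (fun p => G p ζ) μ := by
    intro ζ
    refine Integrable.mono' (integrable_const
      (C * (1 + Real.sqrt 2)^K * (1 + ‖ζ‖) ^ (2*M + K)
          * Real.exp (2 * (1 + Real.sqrt 2) * A * imNorm ζ))) (hGmeas ζ) ?_
    exact hae.mono fun p hp => hGb p hp ζ
  have hrepr : ∀ ζ : Ec2,
      (∫ s in Set.Icc (-2 : ℝ) 2, ∫ a in Set.Ioc (0 : ℝ) 1,
        ((a : ℂ) * ζ 0) ^ (2 * M)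
          * F (v2c ((a : ℂ) * ζ 0) ((Real.sqrt a : ℂ) * (ζ 1 - (s : ℂ) * ζ 0)))
          * ((a ^ (-(3/2) : ℝ) : ℝ) : ℂ)) = ∫ p, G p ζ ∂μ := by
    intro ζ
    exact MeasureTheory.integral_integral (f := fun s a => G (s, a) ζ) (hGint ζ)
  constructor
  · have heq : (fun ζ : Ec2 =>
        ∫ s in Set.Icc (-2 : ℝ) 2, ∫ a in Set.Ioc (0 : ℝ) 1,
          ((a : ℂ) * ζ 0) ^ (2 * M)
            * F (v2c ((a : ℂ) * ζ 0) ((Real.sqrt a : ℂ) * (ζ 1 - (s : ℂ) * ζ 0)))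
            * ((a ^ (-(3/2) : ℝ) : ℝ) : ℂ)) = fun ζ => ∫ p, G p ζ ∂μ :=
      funext fun ζ => hrepr ζ
    rw [heq]
    intro ζ₀
    set Cb : ℝ := C * (1 + Real.sqrt 2)^K * (1 + (‖ζ₀‖ + 2)) ^ (2*M + K)
        * Real.exp (2 * (1 + Real.sqrt 2) * A * (‖ζ₀‖ + 2)) with hCbdef
    have hCnn : (0:ℝ) ≤ C * (1 + Real.sqrt 2)^K := mul_nonneg hC.le (by positivity)
    have hBle : ∀ w : Ec2, ‖w‖ ≤ ‖ζ₀‖ + 2 →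
        C * (1 + Real.sqrt 2)^K * (1 + ‖w‖) ^ (2*M + K)
          * Real.exp (2 * (1 + Real.sqrt 2) * A * imNorm w) ≤ Cb := by
      intro w hwn
      have him : imNorm w ≤ ‖ζ₀‖ + 2 := (imNorm_le_norm w).trans hwn
      have e1 : (1 + ‖w‖) ^ (2*M + K) ≤ (1 + (‖ζ₀‖ + 2)) ^ (2*M + K) :=
        pow_le_pow_left₀ (by positivity) (by linarith) _
      have hAnn : (0:ℝ) ≤ 2 * (1 + Real.sqrt 2) * A :=
        mul_nonneg (by positivity) hA.le
      have e2 : Real.exp (2 * (1 + Real.sqrt 2) * A * imNorm w)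
          ≤ Real.exp (2 * (1 + Real.sqrt 2) * A * (‖ζ₀‖ + 2)) :=
        Real.exp_le_exp.2 (mul_le_mul_of_nonneg_left him hAnn)
      exact mul_le_mul (mul_le_mul_of_nonneg_left e1 hCnn) e2 (Real.exp_pos _).le
        (mul_nonneg hCnn (by positivity))
    have key : HasFDerivAt (fun ζ : Ec2 => ∫ p, G p ζ ∂μ)
        (∫ p, Fd M F p.1 p.2 ζ₀ ∂μ) ζ₀ := by
      apply hasFDerivAt_integral_of_dominated_of_fderiv_le
        (F := fun (ζ : Ec2) (p : ℝ × ℝ) => G p ζ)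
        (F' := fun (ζ : Ec2) (p : ℝ × ℝ) => Fd M F p.1 p.2 ζ)
        (bound := fun _ => 2 * Cb + 1) (s := Metric.ball ζ₀ 1) (Metric.ball_mem_nhds ζ₀ one_pos)
      · exact Eventually.of_forall fun x => hGmeas x
      · exact hGint ζ₀
      · -- measurability of the derivative
        borelize Ec2
        have m1 : Measurable fun p : ℝ × ℝ => Tclm p.1 p.2 ζ₀ := (hTcont ζ₀).measurable
        have m2 : Measurable fun p : ℝ × ℝ => fderiv ℂ (Phi M F) (Tclm p.1 p.2 ζ₀) :=
          (measurable_fderiv (𝕜 := ℂ) (f := Phi M F)).comp m1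
        have hcomp : Continuous fun q : (Ec2 →L[ℂ] ℂ) × (Ec2 →L[ℂ] Ec2) =>
            q.1.comp q.2 := isBoundedBilinearMap_comp.continuous
        have m3 : Measurable fun p : ℝ × ℝ =>
            (fderiv ℂ (Phi M F) (Tclm p.1 p.2 ζ₀)).comp (Tclm p.1 p.2) :=
          hcomp.measurable.comp (m2.prodMk hTop.measurable)
        have m4 : Measurable fun p : ℝ × ℝ => ((p.2 ^ (-(3/2):ℝ) : ℝ) : ℂ) :=
          Complex.measurable_ofReal.comp (measurable_snd.pow_const _)
        have hsm : Continuous fun q : ℂ × (Ec2 →L[ℂ] ℂ) => q.1 • q.2 := continuous_smul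
        have m5 : Measurable fun p : ℝ × ℝ => Fd M F p.1 p.2 ζ₀ :=
          hsm.measurable.comp (m4.prodMk m3)
        exact m5.stronglyMeasurable.aestronglyMeasurable
      · -- the uniform bound on the derivative
        refine hae.mono fun p hp x hx => ?_
        have hfd : fderiv ℂ (G p) x = Fd M F p.1 p.2 x := by
          rw [hGfun p]
          exact (G_hasFDeriv M F hF p.1 p.2 x).fderiv
        rw [← hfd]
        apply cauchy_bound (G p) (hGdiff p) x Cb
        intro w hw
        have hd1 : dist w x ≤ 1 := Metric.mem_closedBall.1 hw
        have hd2 : dist x ζ₀ < 1 := Metric.mem_ball.1 hx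
        have hwn : ‖w‖ ≤ ‖ζ₀‖ + 2 := by
          have h1 : ‖w‖ ≤ ‖ζ₀‖ + ‖w - ζ₀‖ := by
            calc ‖w‖ = ‖ζ₀ + (w - ζ₀)‖ := by rw [add_sub_cancel]
              _ ≤ ‖ζ₀‖ + ‖w - ζ₀‖ := norm_add_le _ _
          have h2 : dist w ζ₀ ≤ dist w x + dist x ζ₀ := dist_triangle _ _ _
          rw [dist_eq_norm] at h2
          linarith
        exact (hGb p hp w).trans (hBle w hwn)
      · exact integrable_const _
      · refine Eventually.of_forall fun p x _ => ?_
        have := G_hasFDeriv M F hF p.1 p.2 x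
        rw [← hGfun p] at this
        exact this
    exact key.differentiableAt
  · refine ⟨4 * (C * (1 + Real.sqrt 2)^K), by positivity, fun ζ => ?_⟩
    have vIoc : (volume (Set.Ioc (0:ℝ) 1)).toReal = 1 := by
      rw [Real.volume_Ioc]
      norm_num
    have vIcc : (volume (Set.Icc (-2:ℝ) 2)).toReal = 4 := by
      rw [Real.volume_Icc]
      norm_num
    set B : ℝ := C * (1 + Real.sqrt 2)^K * (1 + ‖ζ‖) ^ (2*M + K)
        * Real.exp (2 * (1 + Real.sqrt 2) * A * imNorm ζ) with hBdef
    have hinner : ∀ s ∈ Set.Icc (-2:ℝ) 2,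
        ‖∫ a in Set.Ioc (0 : ℝ) 1,
            ((a : ℂ) * ζ 0) ^ (2 * M)
              * F (v2c ((a : ℂ) * ζ 0) ((Real.sqrt a : ℂ) * (ζ 1 - (s : ℂ) * ζ 0)))
              * ((a ^ (-(3/2) : ℝ) : ℝ) : ℂ)‖ ≤ B := by
      intro s hs
      have h := norm_setIntegral_le_of_norm_le_const_ae
        (by rw [Real.volume_Ioc]; exact ENNReal.ofReal_lt_top)
        ((ae_restrict_mem measurableSet_Ioc).mono fun a ha =>
          pt_bound M hM A hA K F C hC hbd a s ha hs ζ)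
      rw [measureReal_def, vIoc, mul_one] at h
      exact h
    have houter := norm_setIntegral_le_of_norm_le_const_ae
      (by rw [Real.volume_Icc]; exact ENNReal.ofReal_lt_top)
      ((ae_restrict_mem measurableSet_Icc).mono fun s hs => hinner s hs)
    rw [measureReal_def, vIcc] at houter
    calc ‖∫ s in Set.Icc (-2 : ℝ) 2, ∫ a in Set.Ioc (0 : ℝ) 1,
          ((a : ℂ) * ζ 0) ^ (2 * M)
            * F (v2c ((a : ℂ) * ζ 0) ((Real.sqrt a : ℂ) * (ζ 1 - (s : ℂ) * ζ 0)))
            * ((a ^ (-(3/2) : ℝ) : ℝ) : ℂ)‖ ≤ B * 4 := houter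
      _ = 4 * (C * (1 + Real.sqrt 2)^K) * (1 + ‖ζ‖) ^ (2*M + K)
            * Real.exp (2 * (1 + Real.sqrt 2) * A * imNorm ζ) := by
          rw [hBdef]; ring
end
end

section
/- Let ψ be a shearlet with M > 1 vanishing moments in the x₁-direction and write ψ̂(ξ) = ξ₁^{M−1} μ̂(ξ), where μ is a shearlet with one vanishing moment in the x₁-direction. Then for every 0 < δ ≤ 1 and every ξ ∈ ℝ² with 0 < |ξ₁| ≤ δ one has Δ_ψ(ξ) ≤ C_μ δ^{2(M−1)}. -/
/-
Common setup: we work on ℝ² = `EuclideanSpace ℝ (Fin 2)`.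
The Fourier transform uses the paper's convention f̂(ω) = ∫ f(x) e^{2πi ω·x} dx.
Since a general L² function need not be integrable, the Fourier transform of an
L² function `f` is represented by a function `g` together with the hypothesis
`IsFT f g`, which says that `g` is the Fourier transform of `f` in the weak
(tempered-distribution/Parseval) sense.
-/

noncomputable section
open MeasureTheory Filter Metric Complex
open scoped Real RealInnerProductSpace Pointwise

/-! ### Auxiliary material for Statement 18 -/

/-- Derivative of the shear-dilation change-of-variables map. -/
lemma hasFDerivAt_covMap18 (c₁ c₂ : ℝ) (p : ℝ × ℝ) (hp : 0 < p.2) :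
    HasFDerivAt (fun q : ℝ × ℝ => (q.2 * c₁, Real.sqrt q.2 * (c₂ - q.1 * c₁)))
      (LinearMap.toContinuousLinearMap (Matrix.toLin (Module.Basis.finTwoProd ℝ) (Module.Basis.finTwoProd ℝ)
        !![0, c₁; -(Real.sqrt p.2 * c₁), (c₂ - p.1 * c₁) * (1 / (2 * Real.sqrt p.2))])) p := by
  rw [Matrix.toLin_finTwoProd_toContinuousLinearMap]
  have hu : HasFDerivAt (fun q : ℝ × ℝ => Real.sqrt q.2)
      ((1 / (2 * Real.sqrt p.2)) • ContinuousLinearMap.snd ℝ ℝ ℝ) p :=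
    (Real.hasDerivAt_sqrt hp.ne').comp_hasFDerivAt p hasFDerivAt_snd
  have hv : HasFDerivAt (fun q : ℝ × ℝ => c₂ - q.1 * c₁)
      (-(c₁ • ContinuousLinearMap.fst ℝ ℝ ℝ)) p := by
    simpa using ((hasFDerivAt_fst (𝕜 := ℝ) (p := p)).mul_const c₁).const_sub c₂
  have h1 : HasFDerivAt (fun q : ℝ × ℝ => q.2 * c₁)
      (c₁ • ContinuousLinearMap.snd ℝ ℝ ℝ) p := by
    simpa using (hasFDerivAt_snd (𝕜 := ℝ) (p := p)).mul_const c₁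
  refine (h1.prodMk (hu.mul hv)).congr_fderiv ?_
  ext <;> simp [smul_smul, neg_mul, smul_neg, mul_comm]

/-- Change of variables estimate: integrating `F` over the image of the shear-dilation
parametrization is at most the full integral of `F`. -/
lemma cov_estimate18 (F : ℝ × ℝ → ℝ) (hF : Integrable F (volume : Measure (ℝ × ℝ)))
    (hF0 : ∀ ω, 0 ≤ F ω) (c₁ c₂ : ℝ) (hc : c₁ ≠ 0) :
    IntegrableOn (fun p : ℝ × ℝ =>
        (Real.sqrt p.2 * c₁ ^ 2) * F (p.2 * c₁, Real.sqrt p.2 * (c₂ - p.1 * c₁)))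
        (Set.Icc (-2:ℝ) 2 ×ˢ Set.Ioc (0:ℝ) 1) volume ∧
    ∫ p in (Set.Icc (-2:ℝ) 2 ×ˢ Set.Ioc (0:ℝ) 1),
        (Real.sqrt p.2 * c₁ ^ 2) * F (p.2 * c₁, Real.sqrt p.2 * (c₂ - p.1 * c₁))
      ≤ ∫ ω, F ω := by
  set f : ℝ × ℝ → ℝ × ℝ := fun q => (q.2 * c₁, Real.sqrt q.2 * (c₂ - q.1 * c₁)) with hf_def
  set B : ℝ × ℝ → ℝ × ℝ →L[ℝ] ℝ × ℝ := fun p =>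
    LinearMap.toContinuousLinearMap (Matrix.toLin (Module.Basis.finTwoProd ℝ) (Module.Basis.finTwoProd ℝ)
      !![0, c₁; -(Real.sqrt p.2 * c₁), (c₂ - p.1 * c₁) * (1 / (2 * Real.sqrt p.2))]) with hB_def
  set S : Set (ℝ × ℝ) := Set.Icc (-2:ℝ) 2 ×ˢ Set.Ioc (0:ℝ) 1 with hS_def
  have hs : MeasurableSet S := measurableSet_Icc.prod measurableSet_Ioc
  have hf' : ∀ p ∈ S, HasFDerivWithinAt f (B p) S p := fun p hp =>
    (hasFDerivAt_covMap18 c₁ c₂ p hp.2.1).hasFDerivWithinAt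
  have hinj : Set.InjOn f S := by
    rintro ⟨s₁, a₁⟩ h₁ ⟨s₂, a₂⟩ h₂ he
    have ha : a₁ = a₂ := mul_right_cancel₀ hc (congrArg Prod.fst he)
    have h2 := congrArg Prod.snd he
    simp only [f, ha] at h2 ⊢
    have hsqrt : Real.sqrt a₂ ≠ 0 := by
      have := h₂.2.1; positivity
    have : c₂ - s₁ * c₁ = c₂ - s₂ * c₁ := mul_left_cancel₀ hsqrt h2
    have hs12 : s₁ = s₂ := by
      have h3 : s₁ * c₁ = s₂ * c₁ := by linarith
      exact mul_right_cancel₀ hc h3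
    simp [hs12, ha]
  have hdet : ∀ p ∈ S, |(B p).det| = Real.sqrt p.2 * c₁ ^ 2 := by
    intro p hp
    have h0 : (0:ℝ) ≤ Real.sqrt p.2 * c₁ ^ 2 := by positivity
    rw [abs_eq h0]
    left
    simp only [hB_def, ContinuousLinearMap.det, ContinuousLinearMap.coe_coe,
      LinearMap.coe_toContinuousLinearMap, LinearMap.det_toLin, Matrix.det_fin_two_of]
    ring
  have key := integral_image_eq_integral_abs_det_fderiv_smul volume hs hf' hinj F
  have hint : IntegrableOn F (f '' S) volume := hF.integrableOn
  have hint2 : IntegrableOn (fun p => |(B p).det| • F (f p)) S volume :=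
    (integrableOn_image_iff_integrableOn_abs_det_fderiv_smul volume hs hf' hinj F).mp hint
  have heq : Set.EqOn (fun p => |(B p).det| • F (f p))
      (fun p : ℝ × ℝ =>
        (Real.sqrt p.2 * c₁ ^ 2) * F (p.2 * c₁, Real.sqrt p.2 * (c₂ - p.1 * c₁))) S := by
    intro p hp
    simp only [smul_eq_mul, hdet p hp, f]
  constructor
  · exact hint2.congr_fun heq hs
  · calc ∫ p in S, (Real.sqrt p.2 * c₁ ^ 2) * F (p.2 * c₁, Real.sqrt p.2 * (c₂ - p.1 * c₁))
        = ∫ p in S, |(B p).det| • F (f p) := (setIntegral_congr_fun hs heq).symm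
      _ = ∫ x in f '' S, F x := key.symm
      _ ≤ ∫ ω, F ω := setIntegral_le_integral hF (ae_of_all _ hF0)

/-- The volume-preserving identification of `ℝ × ℝ` with `E2`. -/
def eqivE2 : E2 ≃ᵐ ℝ × ℝ :=
  (MeasurableEquiv.toLp 2 (Fin 2 → ℝ)).symm.trans (MeasurableEquiv.finTwoArrow)

lemma eqivE2_measurePreserving : MeasurePreserving eqivE2 volume volume :=
  (volume_preserving_finTwoArrow ℝ).comp
    (EuclideanSpace.volume_preserving_symm_measurableEquiv_toLp (Fin 2))

lemma eqivE2_symm_apply (p : ℝ × ℝ) : eqivE2.symm p = v2 p.1 p.2 := by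
  ext i
  fin_cases i <;> rfl

lemma integral_E2_eq (G : E2 → ℝ) : ∫ ω : E2, G ω = ∫ p : ℝ × ℝ, G (v2 p.1 p.2) := by
  rw [← MeasurePreserving.integral_comp (eqivE2_measurePreserving.symm eqivE2)
    eqivE2.symm.measurableEmbedding G]
  simp only [eqivE2_symm_apply]

lemma integrable_E2_transfer (G : E2 → ℝ) (hG : Integrable G (volume : Measure E2)) :
    Integrable (fun p : ℝ × ℝ => G (v2 p.1 p.2)) (volume : Measure (ℝ × ℝ)) := by
  have h := (MeasurePreserving.integrable_comp_emb (eqivE2_measurePreserving.symm eqivE2)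
    eqivE2.symm.measurableEmbedding (g := G)).mpr hG
  refine h.congr (ae_of_all _ fun p => ?_)
  simp [Function.comp, eqivE2_symm_apply]

lemma v2_zero (x y : ℝ) : v2 x y 0 = x := by simp [v2]
lemma v2_one (x y : ℝ) : v2 x y 1 = y := by simp [v2]

/-- for a shearlet ψ with M > 1 vanishing moments, writing
ψ̂(ξ) = ξ₁^{M−1}μ̂(ξ) with μ a shearlet with one vanishing moment, one has
Δ_ψ(ξ) ≤ C_μ δ^{2(M−1)} for all 0 < δ ≤ 1 and 0 < |ξ₁| ≤ δ. -/
theorem delta_small_strip_estimate_M_gt_one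
    (ψ μ hatψ hatμ : E2 → ℂ) (M : ℕ) (hM : 1 < M)
    (hψ2 : MemLp ψ 2 (volume : Measure E2)) (hμ2 : MemLp μ 2 (volume : Measure E2))
    (hFTψ : IsFT ψ hatψ) (hFTμ : IsFT μ hatμ)
    (hshψ : IsShearlet hatψ M) (hshμ : IsShearlet hatμ 1)
    (hrel : ∀ ξ : E2, hatψ ξ = ((ξ 0 : ℝ) : ℂ) ^ (M - 1) * hatμ ξ) :
    ∀ δ : ℝ, 0 < δ → δ ≤ 1 → ∀ ξ : E2, ξ 0 ≠ 0 → |ξ 0| ≤ δ →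
      Δsh hatψ ξ ≤ Cadm hatμ * δ ^ (2 * (M - 1)) := by
  intro δ hδ hδ1 ξ hξ0 hξδ
  set c₁ : ℝ := ξ 0 with hc₁
  set c₂ : ℝ := ξ 1 with hc₂
  set k : ℕ := M - 1 with hk
  -- the transferred admissibility integrand
  set G : ℝ × ℝ → ℝ := fun ω => ‖hatμ (v2 ω.1 ω.2)‖ ^ 2 / |ω.1| ^ 2 with hG_def
  have hGfun : Integrable (fun ω : E2 => ‖hatμ ω‖ ^ 2 / |ω 0| ^ 2) (volume : Measure E2) := by
    have h2 := hshμ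
    rw [IsShearlet] at h2
    simpa only [mul_one] using h2
  have hGint : Integrable G (volume : Measure (ℝ × ℝ)) := by
    have := integrable_E2_transfer (fun ω : E2 => ‖hatμ ω‖ ^ 2 / |ω 0| ^ 2) hGfun
    simpa [hG_def, v2_zero] using this
  have hG0 : ∀ ω, 0 ≤ G ω := fun ω => by positivity
  have hCadm : Cadm hatμ = ∫ p : ℝ × ℝ, G p := by
    rw [Cadm, integral_E2_eq]
    simp [hG_def, v2_zero]
  obtain ⟨hIntS, hle⟩ := cov_estimate18 G hGint hG0 c₁ c₂ hξ0
  -- the μ-integrand in shear-dilation coordinates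
  set h : ℝ × ℝ → ℝ := fun p =>
    ‖hatμ (v2 (p.2 * c₁) (Real.sqrt p.2 * (c₂ - p.1 * c₁)))‖ ^ 2 * p.2 ^ (-(3/2) : ℝ)
    with hh_def
  set S : Set (ℝ × ℝ) := Set.Icc (-2:ℝ) 2 ×ˢ Set.Ioc (0:ℝ) 1 with hS_def
  have hSmeas : MeasurableSet S := measurableSet_Icc.prod measurableSet_Ioc
  have heqS : Set.EqOn (fun p : ℝ × ℝ =>
      (Real.sqrt p.2 * c₁ ^ 2) * G (p.2 * c₁, Real.sqrt p.2 * (c₂ - p.1 * c₁))) h S := by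
    rintro ⟨s, a⟩ hp
    have ha : 0 < a := hp.2.1
    have hrpow : a ^ (-(3/2) : ℝ) = Real.sqrt a / a ^ 2 := by
      have h1 : a ^ (-(3/2) : ℝ) = a ^ ((1/2 : ℝ) + (-2 : ℝ)) := by norm_num
      rw [h1, Real.rpow_add ha, Real.rpow_neg ha.le, ← Real.rpow_natCast a 2]
      rw [← Real.sqrt_eq_rpow]
      norm_num [div_eq_mul_inv]
    have habs : |a * c₁| ^ 2 = a ^ 2 * c₁ ^ 2 := by
      rw [abs_mul, mul_pow, _root_.sq_abs, _root_.sq_abs]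
    simp only [hG_def, hh_def]
    rw [hrpow, habs]
    have hane : (a:ℝ) ^ 2 ≠ 0 := by positivity
    have hcne : c₁ ^ 2 ≠ 0 := pow_ne_zero 2 hξ0
    field_simp
  have hIntS' : IntegrableOn h S volume := hIntS.congr_fun heqS hSmeas
  have hleS : ∫ p in S, h p ≤ Cadm hatμ := by
    rw [hCadm]
    calc ∫ p in S, h p
        = ∫ p in S, (Real.sqrt p.2 * c₁ ^ 2) * G (p.2 * c₁, Real.sqrt p.2 * (c₂ - p.1 * c₁)) :=
          (setIntegral_congr_fun hSmeas heqS).symm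
      _ ≤ ∫ p : ℝ × ℝ, G p := hle
  -- Fubini setup
  have hrestr : (volume : Measure (ℝ × ℝ)).restrict S =
      ((volume : Measure ℝ).restrict (Set.Icc (-2:ℝ) 2)).prod
        ((volume : Measure ℝ).restrict (Set.Ioc (0:ℝ) 1)) := by
    rw [Measure.prod_restrict, ← Measure.volume_eq_prod]
  have hIntProd : Integrable h
      (((volume : Measure ℝ).restrict (Set.Icc (-2:ℝ) 2)).prod
        ((volume : Measure ℝ).restrict (Set.Ioc (0:ℝ) 1))) := by
    rw [← hrestr]; exact hIntS'
  have hae := hIntProd.prod_right_ae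
  have hGout := hIntProd.integral_prod_left
  have hiter : ∫ p in S, h p
      = ∫ s in Set.Icc (-2:ℝ) 2, ∫ a in Set.Ioc (0:ℝ) 1, h (s, a) := by
    rw [show (∫ p in S, h p) = ∫ p, h p ∂((volume : Measure (ℝ × ℝ)).restrict S) from rfl,
      hrestr, integral_prod _ hIntProd]
  -- pointwise bound on the ψ-integrand
  have hpt : ∀ s : ℝ, ∀ a ∈ Set.Ioc (0:ℝ) 1,
      ‖hatψ (v2 (a * c₁) (Real.sqrt a * (c₂ - s * c₁)))‖ ^ 2 * a ^ (-(3/2) : ℝ)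
        ≤ δ ^ (2 * k) * h (s, a) := by
    intro s a ha
    have hrel' := hrel (v2 (a * c₁) (Real.sqrt a * (c₂ - s * c₁)))
    rw [v2_zero] at hrel'
    have hnorm : ‖hatψ (v2 (a * c₁) (Real.sqrt a * (c₂ - s * c₁)))‖ ^ 2
        = |a * c₁| ^ (2 * k) *
          ‖hatμ (v2 (a * c₁) (Real.sqrt a * (c₂ - s * c₁)))‖ ^ 2 := by
      rw [hrel', norm_mul, mul_pow, norm_pow, Complex.norm_real, Real.norm_eq_abs,
        ← pow_mul, mul_comm k 2]
    have hbound : |a * c₁| ^ (2 * k) ≤ δ ^ (2 * k) := by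
      apply pow_le_pow_left₀ (abs_nonneg _)
      rw [abs_mul, abs_of_pos ha.1]
      calc a * |c₁| ≤ 1 * δ := by
            apply mul_le_mul ha.2 hξδ (abs_nonneg _) zero_le_one
        _ = δ := one_mul δ
    rw [hnorm]
    have h0 : (0:ℝ) ≤ ‖hatμ (v2 (a * c₁) (Real.sqrt a * (c₂ - s * c₁)))‖ ^ 2
        * a ^ (-(3/2) : ℝ) := mul_nonneg (by positivity) (Real.rpow_nonneg ha.1.le _)
    calc |a * c₁| ^ (2 * k) *
          ‖hatμ (v2 (a * c₁) (Real.sqrt a * (c₂ - s * c₁)))‖ ^ 2 * a ^ (-(3/2) : ℝ)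
        = |a * c₁| ^ (2 * k) *
          (‖hatμ (v2 (a * c₁) (Real.sqrt a * (c₂ - s * c₁)))‖ ^ 2 * a ^ (-(3/2) : ℝ)) := by
          ring
      _ ≤ δ ^ (2 * k) *
          (‖hatμ (v2 (a * c₁) (Real.sqrt a * (c₂ - s * c₁)))‖ ^ 2 * a ^ (-(3/2) : ℝ)) :=
          mul_le_mul_of_nonneg_right hbound h0
      _ = δ ^ (2 * k) * h (s, a) := rfl
  -- inner integral bound, for a.e. s
  have hinner : ∀ᵐ s ∂((volume : Measure ℝ).restrict (Set.Icc (-2:ℝ) 2)),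
      (∫ a in Set.Ioc (0:ℝ) 1,
        ‖hatψ (v2 (a * c₁) (Real.sqrt a * (c₂ - s * c₁)))‖ ^ 2 * a ^ (-(3/2) : ℝ))
      ≤ δ ^ (2 * k) * ∫ a in Set.Ioc (0:ℝ) 1, h (s, a) := by
    filter_upwards [hae] with s hs
    rw [← integral_const_mul]
    apply integral_mono_of_nonneg
    · refine (ae_restrict_iff' measurableSet_Ioc).mpr (ae_of_all _ fun a ha => ?_)
      exact mul_nonneg (by positivity) (Real.rpow_nonneg ha.1.le _)
    · exact hs.const_mul _
    · exact (ae_restrict_iff' measurableSet_Ioc).mpr (ae_of_all _ fun a ha => hpt s a ha)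
  -- outer integral
  have houter : Δsh hatψ ξ ≤ ∫ s in Set.Icc (-2:ℝ) 2,
      δ ^ (2 * k) * ∫ a in Set.Ioc (0:ℝ) 1, h (s, a) := by
    apply integral_mono_of_nonneg
    · refine ae_of_all _ fun s => setIntegral_nonneg measurableSet_Ioc fun a ha => ?_
      exact mul_nonneg (by positivity) (Real.rpow_nonneg ha.1.le _)
    · exact hGout.const_mul _
    · exact hinner
  have hfinal : ∫ s in Set.Icc (-2:ℝ) 2,
      δ ^ (2 * k) * ∫ a in Set.Ioc (0:ℝ) 1, h (s, a)
      = δ ^ (2 * k) * ∫ p in S, h p := by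
    rw [integral_const_mul, hiter]
  have h2k : 2 * (M - 1) = 2 * k := rfl
  rw [h2k]
  calc Δsh hatψ ξ ≤ δ ^ (2 * k) * ∫ p in S, h p := by rw [← hfinal]; exact houter
    _ ≤ δ ^ (2 * k) * Cadm hatμ :=
        mul_le_mul_of_nonneg_left hleS (pow_nonneg hδ.le _)
    _ = Cadm hatμ * δ ^ (2 * k) := mul_comm _ _
end
end
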